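/- arXiv:2510.07246 — 3 statements merged into one kernel-verified Lean document; each statement's English description precedes it below -/
import Mathlib

section
/- There is a constant K > 0 such that for every n that is a power of two, Multiplex_n can be implemented exactly by a unitary Clifford+Magic circuit acting on the ⌈log₂ n⌉ + n + 1 input qubits together with ancilla qubits initialized in |0⟩ and returned to |0⟩, in which every magic gate acts on at most 3 qubits and the total number of magic gates is at most K·n; that is, M^unitary_{0,3}(Multiplex_n) = O(n). -/
open Matrix BigOperators

attribute [local instance] Classical.propDecidable

namespace MagicComm

variable {ι : Type} [Fintype ι] [DecidableEq ι]

/-- Square matrices indexed by computational-basis states of qubits labelled by `ι`. -/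
abbrev QMat (ι : Type) [Fintype ι] [DecidableEq ι] : Type :=
  Matrix (ι → Bool) (ι → Bool) ℂ

/-- The Pauli operator `X^u · Z^w`, sending `|t⟩` to `(-1)^{w·t} |t ⊕ u⟩`. -/
noncomputable def pauliXZ (u w : ι → Bool) : QMat ι := fun s t =>
  if s = (fun i => xor (t i) (u i)) then
    (-1 : ℂ) ^ (Finset.univ.filter fun i => w i = true ∧ t i = true).card
  else 0

/-- An `ι`-qubit Pauli operator: a fourth root of unity times `X^u Z^w`. -/
def IsPauli (P : QMat ι) : Prop :=
  ∃ (α : ℂ) (u w : ι → Bool),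
    (α = 1 ∨ α = -1 ∨ α = Complex.I ∨ α = -Complex.I) ∧ P = α • pauliXZ u w

/-- A Clifford unitary: a unitary conjugating every Pauli operator to a Pauli operator. -/
def IsClifford (C : QMat ι) : Prop :=
  C ∈ Matrix.unitaryGroup (ι → Bool) ℂ ∧ ∀ P : QMat ι, IsPauli P → IsPauli (C * P * Cᴴ)

noncomputable def extendOn (S : Finset ι)
    (V : Matrix ({i : ι // i ∈ S} → Bool) ({i : ι // i ∈ S} → Bool) ℂ) : QMat ι := fun s t =>
  if ∀ i ∉ S, s i = t i then V (fun i => s i.1) (fun i => t i.1) else 0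

/-- `U` acts (at most) on the qubits in `S`. -/
def ActsOn (U : QMat ι) (S : Finset ι) : Prop := ∃ V, U = extendOn S V

/-- A gate of a circuit: a matrix tagged according to whether it counts as a magic gate. -/
structure Gate (ι : Type) [Fintype ι] [DecidableEq ι] : Type where
  mat : QMat ι
  isMagic : Bool

/-- A valid gate of a Clifford+Magic circuit: untagged gates must be Clifford, while
tagged (magic) gates may be arbitrary unitaries of weight at most `cM`. -/
def Gate.Valid (cM : ℕ) (g : Gate ι) : Prop :=
  if g.isMagic then
    g.mat ∈ Matrix.unitaryGroup (ι → Bool) ℂ ∧ ∃ S : Finset ι, S.card ≤ cM ∧ ActsOn g.mat S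
  else IsClifford g.mat

/-- The overall unitary implemented by a circuit (a list of gates). -/
noncomputable def circUnitary (gates : List (Gate ι)) : QMat ι := (gates.map Gate.mat).prod

/-- The number of magic gates of a circuit. -/
def magicCount (gates : List (Gate ι)) : ℕ := (gates.filter fun g => g.isMagic).length

/-- Probability that measuring qubit `i0` of the (pure) state `φ` in the computational
basis yields outcome `b`. -/
noncomputable def measProb (φ : (ι → Bool) → ℂ) (i0 : ι) (b : Bool) : ℝ :=
  ∑ s : ι → Bool, if s i0 = b then Complex.normSq (φ s) else 0

/-- The state `|x⟩ ⊗ |ψ⟩` on an input register of `N` qubits and an advice register of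
`a` qubits. -/
noncomputable def inputState {N a : ℕ} (x : Fin N → Bool) (ψ : (Fin a → Bool) → ℂ) :
    ((Fin N ⊕ Fin a) → Bool) → ℂ := fun s =>
  if (fun i => s (Sum.inl i)) = x then ψ (fun j => s (Sum.inr j)) else 0

/-- `ψ` is a unit vector. -/
def Normalized {a : ℕ} (ψ : (Fin a → Bool) → ℂ) : Prop :=
  ∑ v : Fin a → Bool, Complex.normSq (ψ v) = 1

/-- The qubits of the `n`-qubit quantum multiplexer: a `⌈log₂ n⌉`-qubit index register,
an `n`-qubit array register, and one target qubit. -/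
abbrev MIdx (n : ℕ) : Type := Fin (Nat.clog 2 n) ⊕ (Fin n ⊕ Fin 1)

/-- The value (written in binary, little-endian) of the index register. -/
def mplexVal {n : ℕ} (s : (MIdx n) → Bool) : ℕ :=
  ∑ j : Fin (Nat.clog 2 n), if s (Sum.inl j) then 2 ^ (j : ℕ) else 0

/-- The action of the quantum multiplexer on computational basis states: controlled on
the index register holding (the binary representation of) `i`, swap the `i`-th array
qubit with the target qubit (and do nothing when the index register holds a value
outside the range of the array). -/
def mplexFun {n : ℕ} (t : (MIdx n) → Bool) : (MIdx n) → Bool :=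
  if h : mplexVal t < n then
    fun j => match j with
      | Sum.inl j => t (Sum.inl j)
      | Sum.inr (Sum.inl p) =>
          if p = (⟨mplexVal t, h⟩ : Fin n) then t (Sum.inr (Sum.inr 0))
          else t (Sum.inr (Sum.inl p))
      | Sum.inr (Sum.inr _) => t (Sum.inr (Sum.inl (⟨mplexVal t, h⟩ : Fin n)))
  else t

/-- The `n`-qubit quantum multiplexer `Multiplex_n`, a unitary on `⌈log₂ n⌉ + n + 1`
qubits. -/
noncomputable def multiplexMat (n : ℕ) : QMat (MIdx n) := fun s t =>
  if s = mplexFun t then 1 else 0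

/-- Embed a state of the system qubits `ι` into system plus `a` ancilla qubits in `|0⟩`. -/
noncomputable def withZeroAncilla {ι : Type} [Fintype ι] [DecidableEq ι] {a : ℕ}
    (φ : (ι → Bool) → ℂ) : ((ι ⊕ Fin a) → Bool) → ℂ := fun s =>
  if ∀ j : Fin a, s (Sum.inr j) = false then φ (fun i => s (Sum.inl i)) else 0

/-- The circuit `gates` (acting on the system plus `a` ancilla qubits initialized in
`|0⟩`) implements `U` exactly, returning the ancillas to `|0⟩`. -/
def ImplementsExactly {ι : Type} [Fintype ι] [DecidableEq ι] {a : ℕ}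
    (gates : List (Gate (ι ⊕ Fin a))) (U : QMat ι) : Prop :=
  ∀ φ : (ι → Bool) → ℂ,
    (circUnitary gates).mulVec (withZeroAncilla φ) = withZeroAncilla (U.mulVec φ)

/-- permutation matrix -/
noncomputable def permMat (f : (ι → Bool) → (ι → Bool)) : QMat ι :=
  fun s t => if s = f t then 1 else 0

lemma permMat_mul (f g : (ι → Bool) → (ι → Bool)) :
    permMat f * permMat g = permMat (f ∘ g) := by
  ext s t
  simp only [permMat, Matrix.mul_apply, Function.comp]
  rw [Finset.sum_eq_single (g t)]
  · simp
  · intro u _ hu; simp [hu, Ne.symm hu]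
  · simp

lemma permMat_id : permMat (ι := ι) id = 1 := by
  ext s t
  simp [permMat, Matrix.one_apply, eq_comm]

lemma permMat_mulVec (f g : (ι → Bool) → (ι → Bool))
    (hfg : ∀ s, f (g s) = s) (hgf : ∀ s, g (f s) = s) (φ : (ι → Bool) → ℂ) :
    (permMat f).mulVec φ = fun s => φ (g s) := by
  funext s
  simp only [Matrix.mulVec, dotProduct, permMat]
  rw [Finset.sum_eq_single (g s)]
  · simp [hfg]
  · intro u _ hu
    have : s ≠ f u := by
      intro h; exact hu (by rw [h, hgf])
    simp [this]
  · simp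

lemma permMat_conjTranspose (f g : (ι → Bool) → (ι → Bool))
    (hfg : ∀ s, f (g s) = s) (hgf : ∀ s, g (f s) = s) :
    (permMat f)ᴴ = permMat g := by
  ext s t
  simp only [Matrix.conjTranspose_apply, permMat]
  have h : t = f s ↔ s = g t := by
    constructor
    · intro h; rw [h, hgf]
    · intro h; rw [h, hfg]
  simp only [h]
  split <;> simp

lemma permMat_unitary (f g : (ι → Bool) → (ι → Bool))
    (hfg : ∀ s, f (g s) = s) (hgf : ∀ s, g (f s) = s) :
    permMat f ∈ Matrix.unitaryGroup (ι → Bool) ℂ := by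
  rw [Matrix.mem_unitaryGroup_iff]
  have : star (permMat f) = (permMat f)ᴴ := rfl
  rw [this, permMat_conjTranspose f g hfg hgf, permMat_mul]
  have : f ∘ g = id := funext hfg
  rw [this, permMat_id]

/-- locality: if `f` fixes coordinates outside `S` and depends only on `S` there -/
lemma permMat_actsOn (f : (ι → Bool) → (ι → Bool)) (S : Finset ι)
    (hfix : ∀ s x, x ∉ S → f s x = s x)
    (hloc : ∀ s s', (∀ x ∈ S, s x = s' x) → ∀ x ∈ S, f s x = f s' x) :
    ActsOn (permMat f) S := by
  classical
  -- induced map on S-restricted states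
  set ext0 : ({i : ι // i ∈ S} → Bool) → (ι → Bool) :=
    fun σ i => if h : i ∈ S then σ ⟨i, h⟩ else false with hext0
  set gg : ({i : ι // i ∈ S} → Bool) → ({i : ι // i ∈ S} → Bool) :=
    fun σ i => f (ext0 σ) i.1 with hgg
  refine ⟨permMat gg, ?_⟩
  ext s t
  simp only [permMat, extendOn]
  have key : (s = f t) ↔ ((∀ i ∉ S, s i = t i) ∧ (fun i : {i : ι // i ∈ S} => s i.1)
      = gg (fun i : {i : ι // i ∈ S} => t i.1)) := by
    constructor
    · intro h
      subst h
      constructor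
      · intro i hi; exact hfix t i hi
      · funext i
        simp only [hgg]
        exact hloc t (ext0 (fun i : {i : ι // i ∈ S} => t i.1))
          (by intro x hx; simp [hext0, hx]) i.1 i.2
    · rintro ⟨h1, h2⟩
      funext x
      by_cases hx : x ∈ S
      · have := congrFun h2 ⟨x, hx⟩
        simp only [hgg] at this
        rw [this]
        exact (hloc (ext0 fun i : {i : ι // i ∈ S} => t i.1) t
          (by intro y hy; simp [hext0, hy]) x hx)
      · rw [hfix t x hx]; exact h1 x hx
  by_cases h1 : s = f t
  · obtain ⟨ho, hi⟩ := key.mp h1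
    rw [if_pos h1, if_pos ho, if_pos hi]
  · rw [if_neg h1]
    by_cases ho : ∀ i ∉ S, s i = t i
    · rw [if_pos ho, if_neg (fun hi => h1 (key.mpr ⟨ho, hi⟩))]
    · rw [if_neg ho]

/-- A description of a local reversible gate: an involutive permutation of basis
states supported on a set `S` of at most 3 qubits. -/
structure LGate (ι : Type) [Fintype ι] [DecidableEq ι] : Type where
  f : (ι → Bool) → (ι → Bool)
  S : Finset ι
  hinv : Function.Involutive f
  hfix : ∀ s x, x ∉ S → f s x = s x
  hloc : ∀ s s', (∀ x ∈ S, s x = s' x) → ∀ x ∈ S, f s x = f s' x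
  hcard : S.card ≤ 3

noncomputable def Gate.ofL (g : LGate ι) : Gate ι := ⟨permMat g.f, true⟩

lemma LGate.valid (g : LGate ι) : (Gate.ofL g).Valid 3 := by
  simp only [Gate.Valid, Gate.ofL, if_true]
  exact ⟨permMat_unitary g.f g.f g.hinv g.hinv,
    g.S, g.hcard, permMat_actsOn g.f g.S g.hfix g.hloc⟩

/-- applying a list of local gates, first gate first -/
def runL (l : List (LGate ι)) (s : ι → Bool) : ι → Bool := l.foldl (fun s g => g.f s) s

lemma runL_append (l1 l2 : List (LGate ι)) (s : ι → Bool) :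
    runL (l1 ++ l2) s = runL l2 (runL l1 s) := List.foldl_append ..

lemma runL_reverse_runL (l : List (LGate ι)) (s : ι → Bool) :
    runL l.reverse (runL l s) = s := by
  induction l generalizing s with
  | nil => rfl
  | cons x l ih =>
      rw [List.reverse_cons]
      have h1 : runL (x :: l) s = runL l (x.f s) := rfl
      rw [h1, runL_append, ih (x.f s)]
      show x.f (x.f s) = s
      exact x.hinv s

lemma runL_runL_reverse (l : List (LGate ι)) (s : ι → Bool) :
    runL l (runL l.reverse s) = s := by
  have := runL_reverse_runL l.reverse s
  rwa [List.reverse_reverse] at this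

lemma circUnitary_ofL (l : List (LGate ι)) :
    circUnitary ((l.map Gate.ofL).reverse) = permMat (runL l) := by
  induction l with
  | nil =>
      simp [circUnitary, runL]
      exact permMat_id.symm
  | cons x l ih =>
      show circUnitary ((Gate.ofL x :: l.map Gate.ofL).reverse) = _
      rw [List.reverse_cons]
      simp only [circUnitary, List.map_append, List.prod_append] at *
      rw [ih]
      simp only [List.map_cons, List.map_nil, List.prod_cons, List.prod_nil, mul_one,
        Gate.ofL]
      rw [permMat_mul]
      rfl

lemma magicCount_ofL (l : List (LGate ι)) :
    magicCount ((l.map Gate.ofL).reverse) = l.length := by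
  unfold magicCount
  rw [List.filter_reverse, List.length_reverse]
  have : ∀ g ∈ l.map Gate.ofL, (fun g : Gate ι => g.isMagic) g = true := by
    rintro g hg
    simp only [List.mem_map] at hg
    obtain ⟨x, _, rfl⟩ := hg
    rfl
  rw [List.filter_eq_self.mpr this, List.length_map]

lemma foldl_fixed {α S : Type*} (step : α → S → S) :
    ∀ (l : List α) (s : S), (∀ x ∈ l, step x s = s) → l.foldl (fun s x => step x s) s = s := by
  intro l
  induction l with
  | nil => intro s _; rfl
  | cons z l ih =>
      intro s h
      simp only [List.foldl_cons]
      rw [h z (List.mem_cons_self)]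
      exact ih s (fun x hx => h x (List.mem_cons_of_mem _ hx))

/-- The key one-step transition lemma for folding a list of gates where exactly one
gate acts nontrivially. -/
lemma foldl_transition {α S : Type*} (step : α → S → S) :
    ∀ (l : List α) (sb sa : S) (m : α), m ∈ l → l.Nodup →
      (∀ x ∈ l, x ≠ m → step x sb = sb) → (∀ x ∈ l, x ≠ m → step x sa = sa) →
      step m sb = sa → l.foldl (fun s x => step x s) sb = sa := by
  intro l
  induction l with
  | nil => intro sb sa m hm; simp at hm
  | cons y l ih =>
      intro sb sa m hm hnd hb ha hstep
      simp only [List.foldl_cons]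
      rcases List.mem_cons.mp hm with rfl | hm'
      · rw [hstep]
        have : ∀ x ∈ l, step x sa = sa := by
          intro x hx
          exact ha x (List.mem_cons_of_mem _ hx)
            (fun h => (List.nodup_cons.mp hnd).1 (h ▸ hx))
        exact foldl_fixed step l sa this
      · have hy : y ≠ m := fun h => (List.nodup_cons.mp hnd).1 (h ▸ hm')
        rw [hb y (List.mem_cons_self) hy]
        exact ih sb sa m hm' (List.nodup_cons.mp hnd).2
          (fun x hx => hb x (List.mem_cons_of_mem _ hx))
          (fun x hx => ha x (List.mem_cons_of_mem _ hx)) hstep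


set_option linter.unusedSectionVars false

def swapF (t1 t2 : ι) (x : ι) : ι := if x = t1 then t2 else if x = t2 then t1 else x

lemma swapF_invol (t1 t2 x : ι) : swapF t1 t2 (swapF t1 t2 x) = x := by
  unfold swapF; split_ifs <;> simp_all

lemma swapF_mem (t1 t2 x : ι) (S : Finset ι) (h1 : t1 ∈ S) (h2 : t2 ∈ S) (hx : x ∈ S) :
    swapF t1 t2 x ∈ S := by
  unfold swapF; split_ifs <;> assumption

lemma swapF_eq_self (t1 t2 x : ι) (h1 : x ≠ t1) (h2 : x ≠ t2) : swapF t1 t2 x = x := by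
  simp [swapF, h1, h2]

lemma card_le_three (c t1 t2 : ι) : ({c, t1, t2} : Finset ι).card ≤ 3 := by
  apply le_trans (Finset.card_insert_le _ _)
  have := Finset.card_insert_le t1 ({t2} : Finset ι)
  simp only [Finset.card_singleton] at this
  omega

/-- The NOT gate on qubit `q`. -/
def gNot (q : ι) : LGate ι where
  f := fun s x => if x = q then !(s x) else s x
  S := {q}
  hinv := by
    intro s; funext x
    by_cases h : x = q <;> simp [h]
  hfix := by intro s x hx; simp at hx; simp [hx]
  hloc := by
    intro s s' hag x hx
    simp only [Finset.mem_singleton] at hx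
    subst hx
    simp [hag x (Finset.mem_singleton_self x)]
  hcard := by simp

/-- The Fredkin (controlled-swap) gate with control `c` and targets `t1, t2`. -/
def gFred (c t1 t2 : ι) (h1 : c ≠ t1) (h2 : c ≠ t2) : LGate ι where
  f := fun s x => if s c then s (swapF t1 t2 x) else s x
  S := {c, t1, t2}
  hinv := by
    intro s
    have hc : swapF t1 t2 c = c := swapF_eq_self _ _ _ h1 h2
    by_cases h : s c
    · have h' : (fun x => if s c then s (swapF t1 t2 x) else s x) c = true := by
        simp [hc, h]
      funext x
      simp only [h', if_true, h, if_true]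
      rw [hc] -- no-op safe?
      simp [h, swapF_invol]
    · funext x
      simp [h]
  hfix := by
    intro s x hx
    simp only [Finset.mem_insert, Finset.mem_singleton, not_or] at hx
    show (if s c = true then s (swapF t1 t2 x) else s x) = s x
    rw [swapF_eq_self _ _ _ hx.2.1 hx.2.2]
    simp
  hloc := by
    intro s s' hag x hx
    have hcm : c ∈ ({c, t1, t2} : Finset ι) := by simp
    have h1m : t1 ∈ ({c, t1, t2} : Finset ι) := by simp
    have h2m : t2 ∈ ({c, t1, t2} : Finset ι) := by simp
    have hc := hag c hcm
    have hsw := hag _ (swapF_mem t1 t2 x _ h1m h2m hx)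
    have hxx := hag x hx
    simp only [hc, hsw, hxx]
  hcard := card_le_three c t1 t2

lemma gFred_f (c t1 t2 : ι) (h1 : c ≠ t1) (h2 : c ≠ t2) (s : ι → Bool) :
    (gFred c t1 t2 h1 h2).f s = fun x => if s c then s (swapF t1 t2 x) else s x := rfl

lemma gFred_false (c t1 t2 : ι) (h1 : c ≠ t1) (h2 : c ≠ t2) (s : ι → Bool)
    (hc : s c = false) : (gFred c t1 t2 h1 h2).f s = s := by
  funext x; simp [gFred, hc]

lemma gFred_true (c t1 t2 : ι) (h1 : c ≠ t1) (h2 : c ≠ t2) (s : ι → Bool)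
    (hc : s c = true) : (gFred c t1 t2 h1 h2).f s = fun x => s (swapF t1 t2 x) := by
  funext x; simp [gFred, hc]

lemma gFred_fixed (c t1 t2 : ι) (h1 : c ≠ t1) (h2 : c ≠ t2) (s : ι → Bool)
    (ht : s t1 = s t2) : (gFred c t1 t2 h1 h2).f s = s := by
  funext x
  simp only [gFred]
  by_cases hc : s c
  · simp only [hc, if_true]
    unfold swapF
    split_ifs with ha hb
    · rw [ha, ht]
    · rw [hb, ht]
    · rfl
  · simp [hc]


section Construction

lemma clog_two_pow (k : ℕ) : Nat.clog 2 (2^k) = k := Nat.clog_pow 2 k one_lt_two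

lemma two_pow_pos' (k : ℕ) : 0 < 2^k := pow_pos (by norm_num) k

/-- The wire type of our circuit: the multiplexer qubits plus `2^k` ancillas. -/
abbrev Wt (k : ℕ) : Type := MIdx (2^k) ⊕ Fin (2^k)

def ancW (k p : ℕ) : Wt k := Sum.inr ⟨p % 2^k, Nat.mod_lt _ (two_pow_pos' k)⟩
def tgtW (k : ℕ) : Wt k := Sum.inl (Sum.inr (Sum.inr 0))
def arrW (k p : ℕ) : Wt k :=
  Sum.inl (Sum.inr (Sum.inl ⟨p % 2^k, Nat.mod_lt _ (two_pow_pos' k)⟩))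

lemma idx_lt (k i : ℕ) (h : i < k) : i < Nat.clog 2 (2^k) := by
  rw [clog_two_pow]; exact h

def idxW (k i : ℕ) : Wt k :=
  if h : i < Nat.clog 2 (2^k) then Sum.inl (Sum.inl ⟨i, h⟩) else tgtW k

lemma idxW_ne_ancW (k i p : ℕ) : idxW k i ≠ ancW k p := by
  unfold idxW tgtW ancW; split <;> simp

lemma ancW_ne_arrW (k i p : ℕ) : ancW k i ≠ arrW k p := by simp [ancW, arrW]

lemma ancW_ne_tgtW (k i : ℕ) : ancW k i ≠ tgtW k := by simp [ancW, tgtW]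

lemma ancW_inj (k : ℕ) (q : Fin (2^k)) (p : ℕ) (hp : p < 2^k) :
    ((Sum.inr q : Wt k) = ancW k p) ↔ (q : ℕ) = p := by
  simp [ancW, Fin.ext_iff, Nat.mod_eq_of_lt hp]

/-- The Fredkin gates of the indicator-tree layer `j`. -/
def fredC (k j m : ℕ) : LGate (Wt k) :=
  gFred (idxW k (k-j-1)) (ancW k (m * 2^(k-j))) (ancW k (m * 2^(k-j) + 2^(k-j-1)))
    (idxW_ne_ancW k _ _) (idxW_ne_ancW k _ _)

def levelG (k j : ℕ) : List (LGate (Wt k)) := (List.range (2^j)).map (fredC k j)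

/-- Compute the one-hot indicator of the index register into the ancillas. -/
def computeG (k : ℕ) : List (LGate (Wt k)) :=
  gNot (ancW k 0) :: (List.range k).flatMap (levelG k)

/-- Swap the `i`-th array qubit with the target, controlled on the `i`-th ancilla. -/
def swapC (k i : ℕ) : LGate (Wt k) :=
  gFred (ancW k i) (arrW k i) (tgtW k) (ancW_ne_arrW k _ _) (ancW_ne_tgtW k _)

def swapG (k : ℕ) : List (LGate (Wt k)) := (List.range (2^k)).map (swapC k)

def allG (k : ℕ) : List (LGate (Wt k)) :=
  computeG k ++ swapG k ++ (computeG k).reverse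

/-- Binary digit contribution of index bit `i`. -/
def bitv (k : ℕ) (t : MIdx (2^k) → Bool) (i : ℕ) : ℕ :=
  if h : i < Nat.clog 2 (2^k) then (if t (Sum.inl ⟨i, h⟩) then 2^i else 0) else 0

/-- The position of the unique lit ancilla after `j` levels of the indicator tree. -/
def Ptr (k : ℕ) (t : MIdx (2^k) → Bool) (j : ℕ) : ℕ :=
  ∑ i ∈ Finset.Ico (k-j) k, bitv k t i

/-- Basis state with ancillas zeroed. -/
def embS (k : ℕ) (t : MIdx (2^k) → Bool) : Wt k → Bool := Sum.elim t (fun _ => false)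

/-- Basis state with the one-hot ancilla pattern after `j` levels. -/
def cstS (k : ℕ) (t : MIdx (2^k) → Bool) (j : ℕ) : Wt k → Bool :=
  Sum.elim t (fun p => decide ((p : ℕ) = Ptr k t j))

lemma cstS_anc (k : ℕ) (t : MIdx (2^k) → Bool) (j p : ℕ) (hp : p < 2^k) :
    cstS k t j (ancW k p) = decide (p = Ptr k t j) := by
  simp [cstS, ancW, Nat.mod_eq_of_lt hp]

lemma cstS_idx (k : ℕ) (t : MIdx (2^k) → Bool) (j i : ℕ) (h' : i < Nat.clog 2 (2^k)) :
    cstS k t j (idxW k i) = t (Sum.inl ⟨i, h'⟩) := by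
  simp [cstS, idxW, dif_pos h', show i < k by rwa [clog_two_pow] at h']

lemma bitv_le (k : ℕ) (t : MIdx (2^k) → Bool) (i : ℕ) : bitv k t i ≤ 2^i := by
  unfold bitv; split
  · split <;> simp
  · simp

lemma sum_two_pow (k : ℕ) : ∑ i ∈ Finset.range k, 2^i = 2^k - 1 := by
  induction k with
  | zero => simp
  | succ k ih =>
      rw [Finset.sum_range_succ, ih]
      have := two_pow_pos' k
      rw [pow_succ]
      omega

lemma Ptr_lt (k : ℕ) (t : MIdx (2^k) → Bool) (j : ℕ) : Ptr k t j < 2^k := by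
  have h1 : Ptr k t j ≤ ∑ i ∈ Finset.Ico (k-j) k, 2^i :=
    Finset.sum_le_sum (fun i _ => bitv_le k t i)
  have h2 : ∑ i ∈ Finset.Ico (k-j) k, 2^i ≤ ∑ i ∈ Finset.range k, 2^i := by
    apply Finset.sum_le_sum_of_subset
    intro i hi
    simp only [Finset.mem_Ico] at hi
    exact Finset.mem_range.mpr hi.2
  rw [sum_two_pow] at h2
  have := two_pow_pos' k
  omega

lemma Ptr_dvd (k : ℕ) (t : MIdx (2^k) → Bool) (j : ℕ) : 2^(k-j) ∣ Ptr k t j := by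
  apply Finset.dvd_sum
  intro i hi
  simp only [Finset.mem_Ico] at hi
  unfold bitv
  split
  · split
    · exact pow_dvd_pow 2 hi.1
    · exact dvd_zero _
  · exact dvd_zero _

lemma Ptr_zero (k : ℕ) (t : MIdx (2^k) → Bool) : Ptr k t 0 = 0 := by
  simp [Ptr]

lemma Ptr_succ (k : ℕ) (t : MIdx (2^k) → Bool) (j : ℕ) (hj : j < k) :
    Ptr k t (j+1) = bitv k t (k-j-1) + Ptr k t j := by
  unfold Ptr
  have h1 : k - (j+1) = k - j - 1 := by omega
  have h2 : (k - j - 1) + 1 = k - j := by omega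
  rw [h1, ← Finset.sum_insert (a := k - j - 1) (s := Finset.Ico (k-j) k) (by simp; omega)]
  congr 1
  ext x
  simp only [Finset.mem_Ico, Finset.mem_insert]
  omega

lemma Ptr_k (k : ℕ) (t : MIdx (2^k) → Bool) : Ptr k t k = mplexVal t := by
  have h3 : mplexVal t = ∑ i ∈ Finset.range (Nat.clog 2 (2^k)), bitv k t i := by
    unfold mplexVal
    rw [← Fin.sum_univ_eq_sum_range (fun i => bitv k t i)]
    apply Finset.sum_congr rfl
    intro j _
    unfold bitv
    rw [dif_pos j.isLt]
  rw [h3, clog_two_pow]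
  unfold Ptr
  rw [Nat.sub_self, ← Finset.range_eq_Ico]

lemma mplexVal_lt (k : ℕ) (t : MIdx (2^k) → Bool) : mplexVal t < 2^k := by
  rw [← Ptr_k]; exact Ptr_lt k t k


lemma runL_levelG (k : ℕ) (t : MIdx (2^k) → Bool) (j : ℕ) (hj : j < k) :
    runL (levelG k j) (cstS k t j) = cstS k t (j+1) := by
  have hcl : k - j - 1 < Nat.clog 2 (2^k) := idx_lt k _ (by omega)
  set h2 : ℕ := 2^(k-j-1) with hh2
  have h2pos : 0 < h2 := two_pow_pos' _
  have hpow : 2^(k-j) = h2 * 2 := by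
    rw [hh2, ← pow_succ]
    congr 1
    omega
  have hdvd := Ptr_dvd k t j
  set M : ℕ := Ptr k t j / 2^(k-j) with hM
  have hPM : Ptr k t j = M * 2^(k-j) := (Nat.div_mul_cancel hdvd).symm
  have hPlt := Ptr_lt k t j
  have hMlt : M < 2^j := by
    rw [hM, Nat.div_lt_iff_lt_mul (two_pow_pos' _), ← pow_add]
    rw [show j + (k-j) = k by omega]
    exact hPlt
  have hPsucc : Ptr k t (j+1) = bitv k t (k-j-1) + Ptr k t j := Ptr_succ k t j hj
  have hbit01 : bitv k t (k-j-1) = 0 ∨ bitv k t (k-j-1) = h2 := by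
    unfold bitv
    rw [dif_pos hcl]
    split
    · right; rfl
    · left; rfl
  have cancel : ∀ a b : ℕ, h2 * a = h2 * b → a = b :=
    fun a b h => Nat.eq_of_mul_eq_mul_left h2pos h
  have e1 : ∀ m : ℕ, m * 2^(k-j) = h2 * (2*m) := fun m => by rw [hpow]; ring
  have e2 : Ptr k t j = h2 * (2*M) := by rw [hPM, e1]
  have e3 : Ptr k t (j+1) = h2 * (2*M) ∨ Ptr k t (j+1) = h2 * (2*M+1) := by
    rcases hbit01 with h | h
    · left; rw [hPsucc, h, e2, Nat.zero_add]
    · right; rw [hPsucc, h, e2]; ring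
  have hbnd : ∀ m : ℕ, m < 2^j → m * 2^(k-j) + h2 < 2^k := by
    intro m hm
    have h1 : (m+1) * 2^(k-j) ≤ 2^j * 2^(k-j) := Nat.mul_le_mul_right _ hm
    rw [← pow_add, show j + (k-j) = k by omega] at h1
    have h4 : m * 2^(k-j) + h2 < (m+1) * 2^(k-j) := by
      rw [Nat.succ_mul, hpow]
      omega
    omega
  unfold levelG runL
  rw [List.foldl_map]
  apply foldl_transition (fun m s => (fredC k j m).f s) (List.range (2^j)) _ _ M
    (List.mem_range.mpr hMlt) (List.nodup_range)
  -- gates m ≠ M fix the state before the level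
  · intro m hm hne
    have hm' := List.mem_range.mp hm
    unfold fredC
    apply gFred_fixed
    rw [cstS_anc k t j _ (by have := hbnd m hm'; omega), cstS_anc k t j _ (hbnd m hm')]
    have hA : ¬ (m * 2^(k-j) = Ptr k t j) := by
      intro h
      rw [e1, e2] at h
      have := cancel _ _ h
      omega
    have hB : ¬ (m * 2^(k-j) + h2 = Ptr k t j) := by
      intro h
      rw [e1, e2] at h
      have : h2 * (2*m+1) = h2 * (2*M) := by rw [← h]; ring
      have := cancel _ _ this
      omega
    simp [hA, hB]
  -- gates m ≠ M fix the state after the level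
  · intro m hm hne
    have hm' := List.mem_range.mp hm
    unfold fredC
    apply gFred_fixed
    rw [cstS_anc k t (j+1) _ (by have := hbnd m hm'; omega),
      cstS_anc k t (j+1) _ (hbnd m hm')]
    have hA : ¬ (m * 2^(k-j) = Ptr k t (j+1)) := by
      intro h
      rw [e1] at h
      rcases e3 with h3 | h3 <;> rw [h3] at h <;> have := cancel _ _ h <;> omega
    have hB : ¬ (m * 2^(k-j) + h2 = Ptr k t (j+1)) := by
      intro h
      have h' : h2 * (2*m+1) = Ptr k t (j+1) := by rw [← h, e1]; ring
      rcases e3 with h3 | h3 <;> rw [h3] at h' <;> have := cancel _ _ h' <;> omega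
    simp [hA, hB]
  -- the gate at M performs the transition
  · show (fredC k j M).f (cstS k t j) = cstS k t (j+1)
    unfold fredC
    have hctrl : cstS k t j (idxW k (k-j-1)) = t (Sum.inl ⟨k-j-1, hcl⟩) :=
      cstS_idx k t j _ hcl
    have hbitval : bitv k t (k-j-1)
        = if t (Sum.inl ⟨k-j-1, hcl⟩) then h2 else 0 := by
      unfold bitv
      rw [dif_pos hcl]
    by_cases hb : t (Sum.inl ⟨k-j-1, hcl⟩) = true
    · -- control true: the lit ancilla moves from position P to P + h2
      rw [gFred_true _ _ _ _ _ _ (by rw [hctrl]; exact hb)]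
      have hPj1 : Ptr k t (j+1) = Ptr k t j + h2 := by
        rw [hPsucc, hbitval, if_pos hb]
        omega
      have hp1lt : M * 2^(k-j) < 2^k := by have := hbnd M hMlt; omega
      have hp2lt : M * 2^(k-j) + h2 < 2^k := hbnd M hMlt
      funext x
      cases x with
      | inl y =>
          rw [swapF_eq_self _ _ _ (by simp [ancW]) (by simp [ancW])]
          rfl
      | inr q =>
          have hne12 : M * 2^(k-j) ≠ M * 2^(k-j) + h2 := by omega
          by_cases hq1 : (q : ℕ) = M * 2^(k-j)
          · have hq1' : (Sum.inr q : Wt k) = ancW k (M * 2^(k-j)) :=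
              (ancW_inj k q _ hp1lt).mpr hq1
            rw [hq1']
            rw [show swapF (ancW k (M * 2^(k-j))) (ancW k (M * 2^(k-j) + h2))
                (ancW k (M * 2^(k-j))) = ancW k (M * 2^(k-j) + h2) from by
              simp [swapF]]
            rw [cstS_anc k t j _ hp2lt, cstS_anc k t (j+1) _ hp1lt]
            have hx1 : ¬ (M * 2^(k-j) + h2 = Ptr k t j) := by rw [hPM]; omega
            have hx2 : ¬ (M * 2^(k-j) = Ptr k t (j+1)) := by rw [hPj1, hPM]; omega
            simp [hx1, hx2]
          · by_cases hq2 : (q : ℕ) = M * 2^(k-j) + h2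
            · have hq2' : (Sum.inr q : Wt k) = ancW k (M * 2^(k-j) + h2) :=
                (ancW_inj k q _ hp2lt).mpr hq2
              rw [hq2']
              rw [show swapF (ancW k (M * 2^(k-j))) (ancW k (M * 2^(k-j) + h2))
                  (ancW k (M * 2^(k-j) + h2)) = ancW k (M * 2^(k-j)) from by
                have hne' : ancW k (M * 2^(k-j) + h2) ≠ ancW k (M * 2^(k-j)) := by
                  intro h
                  simp only [ancW, Sum.inr.injEq, Fin.mk.injEq,
                    Nat.mod_eq_of_lt hp1lt, Nat.mod_eq_of_lt hp2lt] at h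
                  omega
                simp [swapF, hne']]
              rw [cstS_anc k t j _ hp1lt, cstS_anc k t (j+1) _ hp2lt]
              have hx1 : M * 2^(k-j) = Ptr k t j := hPM.symm
              have hx2 : M * 2^(k-j) + h2 = Ptr k t (j+1) := by rw [hPj1, hPM]
              simp only [hx1, hx2]
              first
              | rfl
              | (simp; omega)
              
            · have hne1 : (Sum.inr q : Wt k) ≠ ancW k (M * 2^(k-j)) := by
                intro h; exact hq1 ((ancW_inj k q _ hp1lt).mp h)
              have hne2 : (Sum.inr q : Wt k) ≠ ancW k (M * 2^(k-j) + h2) := by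
                intro h; exact hq2 ((ancW_inj k q _ hp2lt).mp h)
              rw [swapF_eq_self _ _ _ hne1 hne2]
              show cstS k t j (Sum.inr q) = cstS k t (j+1) (Sum.inr q)
              have hx1 : ¬ ((q:ℕ) = Ptr k t j) := by rw [hPM]; exact hq1
              have hx2 : ¬ ((q:ℕ) = Ptr k t (j+1)) := by rw [hPj1, hPM]; exact hq2
              simp [cstS, hx1, hx2]
    · -- control false: nothing happens and the pointer does not move
      have hb' : t (Sum.inl ⟨k-j-1, hcl⟩) = false := by
        revert hb
        cases t (Sum.inl ⟨k-j-1, hcl⟩) <;> simp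
      rw [gFred_false _ _ _ _ _ _ (by rw [hctrl]; exact hb')]
      have hPj1 : Ptr k t (j+1) = Ptr k t j := by
        rw [hPsucc, hbitval, if_neg (by simp [hb'])]
        omega
      unfold cstS
      rw [hPj1]


lemma gNot_emb (k : ℕ) (t : MIdx (2^k) → Bool) :
    (gNot (ancW k 0)).f (embS k t) = cstS k t 0 := by
  funext x
  cases x with
  | inl y =>
      show (if (Sum.inl y : Wt k) = ancW k 0 then !(embS k t (Sum.inl y))
        else embS k t (Sum.inl y)) = cstS k t 0 (Sum.inl y)
      rw [if_neg (by simp [ancW])]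
      rfl
  | inr q =>
      show (if (Sum.inr q : Wt k) = ancW k 0 then !(embS k t (Sum.inr q))
        else embS k t (Sum.inr q)) = _
      have h0 : (0:ℕ) < 2^k := two_pow_pos' k
      by_cases hq : (q : ℕ) = 0
      · rw [if_pos ((ancW_inj k q 0 h0).mpr hq)]
        show _ = cstS k t 0 (Sum.inr q)
        simpa [cstS, embS, Ptr_zero] using hq
      · rw [if_neg (fun h => hq ((ancW_inj k q 0 h0).mp h))]
        show _ = cstS k t 0 (Sum.inr q)
        simpa [cstS, embS, Ptr_zero] using hq

lemma runL_compute (k : ℕ) (t : MIdx (2^k) → Bool) :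
    runL (computeG k) (embS k t) = cstS k t k := by
  have main : ∀ j, j ≤ k →
      runL ((List.range j).flatMap (levelG k)) (cstS k t 0) = cstS k t j := by
    intro j
    induction j with
    | zero => intro _; rfl
    | succ j ih =>
        intro hj
        rw [List.range_succ, List.flatMap_append, runL_append, ih (by omega)]
        rw [show List.flatMap (levelG k) [j] = levelG k j by simp]
        exact runL_levelG k t j (by omega)
  show runL ((List.range k).flatMap (levelG k)) ((gNot (ancW k 0)).f (embS k t)) = _
  rw [gNot_emb]
  exact main k le_rfl

lemma mplexFun_eq (k : ℕ) (t : MIdx (2^k) → Bool) :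
    mplexFun t = fun x => match x with
      | Sum.inl j => t (Sum.inl j)
      | Sum.inr (Sum.inl p) =>
          if p = (⟨mplexVal t, mplexVal_lt k t⟩ : Fin (2^k)) then t (Sum.inr (Sum.inr 0))
          else t (Sum.inr (Sum.inl p))
      | Sum.inr (Sum.inr _) =>
          t (Sum.inr (Sum.inl (⟨mplexVal t, mplexVal_lt k t⟩ : Fin (2^k)))) := by
  unfold mplexFun
  rw [dif_pos (mplexVal_lt k t)]
  funext x
  cases x with
  | inl j => rfl
  | inr y =>
      cases y with
      | inl p =>
          show (if p = (⟨mplexVal t, mplexVal_lt k t⟩ : Fin (2^k)) then _ else _)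
            = (if p = (⟨mplexVal t, mplexVal_lt k t⟩ : Fin (2^k)) then _ else _)
          by_cases hp : p = (⟨mplexVal t, mplexVal_lt k t⟩ : Fin (2^k))
          · rfl
          · rfl
      | inr z => rfl

lemma mplexVal_mplexFun (k : ℕ) (t : MIdx (2^k) → Bool) :
    mplexVal (mplexFun t) = mplexVal t := by
  unfold mplexVal
  apply Finset.sum_congr rfl
  intro j _
  rw [mplexFun_eq k t]

lemma mplexFun_invol (k : ℕ) (t : MIdx (2^k) → Bool) :
    mplexFun (mplexFun t) = t := by
  have hv := mplexVal_mplexFun k t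
  rw [mplexFun_eq k (mplexFun t)]
  have hq : (⟨mplexVal (mplexFun t), mplexVal_lt k (mplexFun t)⟩ : Fin (2^k))
      = (⟨mplexVal t, mplexVal_lt k t⟩ : Fin (2^k)) := by
    simp [Fin.ext_iff, hv]
  funext x
  cases x with
  | inl y => rw [mplexFun_eq k t]
  | inr y =>
      cases y with
      | inl p =>
          simp only
          rw [hq]
          by_cases hp : p = (⟨mplexVal t, mplexVal_lt k t⟩ : Fin (2^k))
          · rw [if_pos hp, mplexFun_eq k t]
            simp only
            rw [hp]
          · rw [if_neg hp, mplexFun_eq k t]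
            simp only
            rw [if_neg hp]
      | inr z =>
          simp only
          rw [hq, mplexFun_eq k t]
          simp only
          rw [if_pos trivial]
          have hz : z = 0 := Subsingleton.elim z 0
          rw [hz]

lemma runL_swapC (k : ℕ) (t : MIdx (2^k) → Bool) (l : List ℕ) (hnd : l.Nodup)
    (hmem : mplexVal t ∈ l) (hlt : ∀ i ∈ l, i < 2^k) :
    runL (l.map (swapC k)) (cstS k t k) = cstS k (mplexFun t) k := by
  have hvlt : mplexVal t < 2^k := mplexVal_lt k t
  have hPk : Ptr k t k = mplexVal t := Ptr_k k t
  have hPk' : Ptr k (mplexFun t) k = mplexVal t := by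
    rw [Ptr_k, mplexVal_mplexFun]
  unfold runL
  rw [List.foldl_map]
  apply foldl_transition (fun i s => (swapC k i).f s) l _ _ (mplexVal t) hmem hnd
  · intro i hi hne
    exact gFred_false _ _ _ _ _ _
      (by rw [cstS_anc k t k i (hlt i hi)]; simp [hPk, hne])
  · intro i hi hne
    exact gFred_false _ _ _ _ _ _
      (by rw [cstS_anc k (mplexFun t) k i (hlt i hi)]; simp [hPk', hne])
  · show (swapC k (mplexVal t)).f (cstS k t k) = cstS k (mplexFun t) k
    unfold swapC
    rw [gFred_true _ _ _ _ _ _ (by rw [cstS_anc k t k _ hvlt]; simp [hPk])]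
    funext x
    cases x with
    | inr q =>
        rw [swapF_eq_self _ _ _ (by simp [arrW]) (by simp [tgtW])]
        show cstS k t k (Sum.inr q) = cstS k (mplexFun t) k (Sum.inr q)
        simp [cstS, hPk, hPk']
    | inl y =>
        cases y with
        | inl i =>
            rw [swapF_eq_self _ _ _ (by simp [arrW]) (by simp [tgtW])]
            show cstS k t k (Sum.inl (Sum.inl i)) = cstS k (mplexFun t) k (Sum.inl (Sum.inl i))
            show t (Sum.inl i) = mplexFun t (Sum.inl i)
            rw [mplexFun_eq k t]
        | inr z =>
            cases z with
            | inl p =>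
                by_cases hp : p = (⟨mplexVal t, hvlt⟩ : Fin (2^k))
                · have hx : (Sum.inl (Sum.inr (Sum.inl p)) : Wt k) = arrW k (mplexVal t) := by
                    simp [arrW, Nat.mod_eq_of_lt hvlt, hp]
                  rw [hx]
                  rw [show swapF (arrW k (mplexVal t)) (tgtW k) (arrW k (mplexVal t))
                    = tgtW k from by simp [swapF]]
                  show cstS k t k (tgtW k) = cstS k (mplexFun t) k (arrW k (mplexVal t))
                  show t (Sum.inr (Sum.inr 0))
                    = mplexFun t (Sum.inr (Sum.inl ⟨mplexVal t % 2^k, _⟩))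
                  rw [mplexFun_eq k t]
                  simp only
                  rw [if_pos (by simp [Fin.ext_iff, Nat.mod_eq_of_lt hvlt])]
                · have hne1 : (Sum.inl (Sum.inr (Sum.inl p)) : Wt k) ≠ arrW k (mplexVal t) := by
                    intro h
                    apply hp
                    simp only [arrW, Sum.inl.injEq, Sum.inr.injEq] at h
                    rw [h]
                    simp [Fin.ext_iff, Nat.mod_eq_of_lt hvlt]
                  rw [swapF_eq_self _ _ _ hne1 (by simp [tgtW])]
                  show cstS k t k (Sum.inl (Sum.inr (Sum.inl p)))
                    = cstS k (mplexFun t) k (Sum.inl (Sum.inr (Sum.inl p)))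
                  show t (Sum.inr (Sum.inl p)) = mplexFun t (Sum.inr (Sum.inl p))
                  rw [mplexFun_eq k t]
                  simp only
                  rw [if_neg hp]
            | inr z =>
                have hz : z = 0 := Subsingleton.elim z 0
                subst hz
                show cstS k t k (swapF (arrW k (mplexVal t)) (tgtW k) (tgtW k))
                  = cstS k (mplexFun t) k (tgtW k)
                rw [show swapF (arrW k (mplexVal t)) (tgtW k) (tgtW k)
                  = arrW k (mplexVal t) from by
                    simp [swapF, show (tgtW k : Wt k) ≠ arrW k (mplexVal t) from by
                      simp [tgtW, arrW]]]
                show t (Sum.inr (Sum.inl ⟨mplexVal t % 2^k, _⟩))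
                  = mplexFun t (Sum.inr (Sum.inr 0))
                rw [mplexFun_eq k t]
                simp only
                congr 1
                simp [Fin.ext_iff, Nat.mod_eq_of_lt hvlt]

lemma runL_main (k : ℕ) (t : MIdx (2^k) → Bool) (l : List ℕ) (hnd : l.Nodup)
    (hmem : mplexVal t ∈ l) (hlt : ∀ i ∈ l, i < 2^k) :
    runL (computeG k ++ l.map (swapC k) ++ (computeG k).reverse) (embS k t)
      = embS k (mplexFun t) := by
  rw [runL_append, runL_append, runL_compute, runL_swapC k t l hnd hmem hlt]
  rw [← runL_compute k (mplexFun t)]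
  exact runL_reverse_runL _ _

lemma runL_allG (k : ℕ) (t : MIdx (2^k) → Bool) :
    runL (allG k) (embS k t) = embS k (mplexFun t) := by
  apply runL_main k t (List.range (2^k)) (List.nodup_range)
    (List.mem_range.mpr (mplexVal_lt k t))
  intro i hi
  exact List.mem_range.mp hi

lemma runL_allG_rev (k : ℕ) (t : MIdx (2^k) → Bool) :
    runL (allG k).reverse (embS k t) = embS k (mplexFun t) := by
  have hshape : (allG k).reverse
      = computeG k ++ (List.range (2^k)).reverse.map (swapC k) ++ (computeG k).reverse := by
    unfold allG swapG
    simp [List.reverse_append, List.map_reverse, List.append_assoc]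
  rw [hshape]
  apply runL_main k t ((List.range (2^k)).reverse) (List.nodup_reverse.mpr (List.nodup_range))
    (List.mem_reverse.mpr (List.mem_range.mpr (mplexVal_lt k t)))
  intro i hi
  exact List.mem_range.mp (List.mem_reverse.mp hi)

end Construction

/-- There is a constant `K > 0` such that for every `n` a power of
two, `Multiplex_n` is implemented exactly by a unitary Clifford+Magic circuit (with
ancillas initialized in and returned to `|0⟩`) whose magic gates act on at most `3`
qubits and number at most `K · n`; that is, `M^unitary_{0,3}(Multiplex_n) = O(n)`. -/
theorem multiplex_magic_unitary_upper_bound :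
    ∃ K : ℝ, 0 < K ∧ ∀ n : ℕ, (∃ k : ℕ, n = 2 ^ k) →
      ∃ (a : ℕ) (gates : List (Gate (MIdx n ⊕ Fin a))),
        (∀ g ∈ gates, g.Valid 3) ∧
        ((magicCount gates : ℝ) ≤ K * (n : ℝ)) ∧
        ImplementsExactly gates (multiplexMat n) := by
  refine ⟨3, by norm_num, ?_⟩
  rintro n ⟨k, rfl⟩
  refine ⟨2^k, ((allG k).map Gate.ofL).reverse, ?_, ?_, ?_⟩
  · -- validity of all gates
    intro g hg
    rw [List.mem_reverse, List.mem_map] at hg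
    obtain ⟨x, _, rfl⟩ := hg
    exact LGate.valid x
  · -- magic-gate count
    rw [magicCount_ofL]
    have hc : (computeG k).length = 2^k := by
      unfold computeG
      rw [List.length_cons, List.length_flatMap]
      have hs : ∀ K : ℕ,
          ((List.range K).map (List.length ∘ levelG k)).sum = 2^K - 1 := by
        intro K
        induction K with
        | zero => simp
        | succ K ih =>
            rw [List.range_succ, List.map_append, List.sum_append, ih]
            have h1 : (List.length ∘ levelG k) K = 2^K := by
              simp [levelG]
            have := two_pow_pos' K
            simp only [List.map_cons, List.map_nil, List.sum_cons, List.sum_nil, h1]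
            rw [pow_succ]
            omega
      rw [show (fun a => (levelG k a).length) = List.length ∘ levelG k from rfl, hs]
      have := two_pow_pos' k
      omega
    have hl : (allG k).length = 3 * 2^k := by
      unfold allG
      rw [List.length_append, List.length_append, List.length_reverse, hc]
      unfold swapG
      rw [List.length_map, List.length_range]
      omega
    rw [hl]
    push_cast
    linarith [le_refl ((3:ℝ) * 2^k)]
  · -- exact implementation
    intro φ
    rw [circUnitary_ofL]
    have hFG : ∀ s, runL (allG k) (runL (allG k).reverse s) = s :=
      runL_runL_reverse _
    have hGF : ∀ s, runL (allG k).reverse (runL (allG k) s) = s :=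
      runL_reverse_runL _
    rw [permMat_mulVec (runL (allG k)) (runL (allG k).reverse) hFG hGF]
    have hU : multiplexMat (2^k) = permMat mplexFun := rfl
    rw [hU, permMat_mulVec mplexFun mplexFun (fun u => mplexFun_invol k u)
      (fun u => mplexFun_invol k u)]
    funext s
    show withZeroAncilla φ (runL (allG k).reverse s)
      = withZeroAncilla (fun u => φ (mplexFun u)) s
    by_cases hanc : ∀ jj : Fin (2^k), s (Sum.inr jj) = false
    · have hs : s = embS k (fun i => s (Sum.inl i)) := by
        funext x
        cases x with
        | inl y => rfl
        | inr q => exact hanc q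
      have hG : runL (allG k).reverse s = embS k (mplexFun (fun i => s (Sum.inl i))) := by
        conv_lhs => rw [hs]
        exact runL_allG_rev k _
      rw [hG]
      have h1 : ∀ j : Fin (2^k), embS k (mplexFun fun i => s (Sum.inl i)) (Sum.inr j) = false :=
        fun j => rfl
      unfold withZeroAncilla
      rw [if_pos h1, if_pos hanc]
      rfl
    · have hGanc : ¬ ∀ jj : Fin (2^k), (runL (allG k).reverse s) (Sum.inr jj) = false := by
        intro hG0
        apply hanc
        have hGs : runL (allG k).reverse s
            = embS k (fun i => (runL (allG k).reverse s) (Sum.inl i)) := by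
          funext x
          cases x with
          | inl y => rfl
          | inr q => exact hG0 q
        have hback := hFG s
        rw [hGs, runL_allG k] at hback
        intro jj
        rw [← hback]
        rfl
      unfold withZeroAncilla
      rw [if_neg hGanc, if_neg hanc]


end MagicComm
end

section
/- Let f : D → {0,1} be a partial Boolean function with D ⊆ {0,1}^{n_A} × {0,1}^{n_B}, and suppose f is computed with error ε < 1/2 by a unitary Clifford+Magic circuit containing no magic gates (i.e., a circuit consisting only of Clifford unitaries), with an arbitrary fixed advice state. Then there exist subsets S_A ⊆ {1,…,n_A}, S_B ⊆ {1,…,n_B} and a bit c ∈ {0,1} such that f(x,y) = (⊕_{i∈S_A} x_i) ⊕ (⊕_{j∈S_B} y_j) ⊕ c for all (x,y) ∈ D; consequently D‖(f) ≤ 2. -/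
open Matrix BigOperators

attribute [local instance] Classical.propDecidable

namespace MagicComm

variable {ι : Type} [Fintype ι] [DecidableEq ι]

/-- Concatenation of Alice's and Bob's inputs into one input string. -/
def concat {nA nB : ℕ} (x : Fin nA → Bool) (y : Fin nB → Bool) : Fin (nA + nB) → Bool :=
  Fin.append x y

/-- A deterministic simultaneous message passing protocol for the partial function `f`
(defined on `D`) in which Alice sends `cA` bits and Bob sends `cB` bits. -/
def DparProtocol {nA nB : ℕ} (D : Set ((Fin nA → Bool) × (Fin nB → Bool)))
    (f : (Fin nA → Bool) × (Fin nB → Bool) → Bool) (cA cB : ℕ) : Prop :=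
  ∃ (msgA : (Fin nA → Bool) → (Fin cA → Bool)) (msgB : (Fin nB → Bool) → (Fin cB → Bool))
    (ref : (Fin cA → Bool) → (Fin cB → Bool) → Bool),
    ∀ p ∈ D, ref (msgA p.1) (msgB p.2) = f p

/-- The deterministic simultaneous message passing complexity `D‖(f)`. -/
noncomputable def Dpar {nA nB : ℕ} (D : Set ((Fin nA → Bool) × (Fin nB → Bool)))
    (f : (Fin nA → Bool) × (Fin nB → Bool) → Bool) : ℕ :=
  sInf {c | ∃ cA cB : ℕ, cA + cB = c ∧ DparProtocol D f cA cB}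

/-- The parity `⊕_{i ∈ S} x_i` of the bits of `x` indexed by `S`. -/
noncomputable def parityOn {N : ℕ} (S : Finset (Fin N)) (x : Fin N → Bool) : Bool :=
  decide ((∑ i ∈ S, if x i then (1 : ZMod 2) else 0) = 1)

/-- A non-adaptive parity decision tree of depth `k` computing `f` on `D`: a function
`g : {0,1}^k → {0,1}` and parity functions `p₁, …, p_k` with
`f x = g (p₁ x, …, p_k x)` for all `x ∈ D`. -/
def PDTComputes {N : ℕ} (D : Set (Fin N → Bool)) (f : (Fin N → Bool) → Bool)
    (k : ℕ) : Prop :=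
  ∃ (g : (Fin k → Bool) → Bool) (S : Fin k → Finset (Fin N)),
    ∀ x ∈ D, f x = g (fun i => parityOn (S i) x)

/-- The non-adaptive parity decision tree complexity `PDT^na(f)`. -/
noncomputable def PDTna {N : ℕ} (D : Set (Fin N → Bool)) (f : (Fin N → Bool) → Bool) : ℕ :=
  sInf {k | PDTComputes D f k}


/-! ### Auxiliary lemmas -/

section Aux

lemma isClifford_one : IsClifford (1 : QMat ι) := by
  refine ⟨Submonoid.one_mem _, fun P hP => ?_⟩
  simpa using hP

lemma isClifford_mul {A B : QMat ι} (hA : IsClifford A) (hB : IsClifford B) :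
    IsClifford (A * B) := by
  refine ⟨mul_mem hA.1 hB.1, fun P hP => ?_⟩
  have h : A * B * P * (A * B)ᴴ = A * (B * P * Bᴴ) * Aᴴ := by
    rw [Matrix.conjTranspose_mul]
    simp only [Matrix.mul_assoc]
  rw [h]
  exact hA.2 _ (hB.2 _ hP)

lemma isClifford_circ (gates : List (Gate ι)) (h : ∀ g ∈ gates, IsClifford g.mat) :
    IsClifford (circUnitary gates) := by
  induction gates with
  | nil => simpa [circUnitary] using (isClifford_one (ι := ι))
  | cons g gs ih =>
      have h1 : circUnitary (g :: gs) = g.mat * circUnitary gs := by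
        simp [circUnitary]
      rw [h1]
      exact isClifford_mul (h g (by simp)) (ih (fun g' hg' => h g' (by simp [hg'])))

lemma isPauli_range :
    {P : QMat ι | IsPauli P} =
      Set.range (fun t : Fin 4 × (ι → Bool) × (ι → Bool) =>
        (Complex.I ^ (t.1 : ℕ)) • pauliXZ t.2.1 t.2.2) := by
  ext P
  simp only [Set.mem_setOf_eq, Set.mem_range]
  constructor
  · rintro ⟨α, u, w, hα, rfl⟩
    rcases hα with rfl | rfl | rfl | rfl
    · exact ⟨(0, u, w), by norm_num⟩
    · exact ⟨(2, u, w), by norm_num [show ((2:Fin 4):ℕ) = 2 from rfl, pow_succ,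
        Complex.I_mul_I, neg_smul]⟩
    · exact ⟨(1, u, w), by norm_num⟩
    · exact ⟨(3, u, w), by norm_num [show ((3:Fin 4):ℕ) = 3 from rfl, pow_succ,
        Complex.I_mul_I, neg_smul]⟩
  · rintro ⟨⟨k, u, w⟩, rfl⟩
    refine ⟨Complex.I ^ (k : ℕ), u, w, ?_, rfl⟩
    fin_cases k
    · exact Or.inl (by norm_num)
    · exact Or.inr (Or.inr (Or.inl (by norm_num)))
    · exact Or.inr (Or.inl (by norm_num [pow_succ, Complex.I_mul_I]))
    · exact Or.inr (Or.inr (Or.inr (by norm_num [pow_succ, Complex.I_mul_I])))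

lemma isPauli_conj_inv {C : QMat ι} (hC : IsClifford C) {Q : QMat ι} (hQ : IsPauli Q) :
    IsPauli (Cᴴ * Q * C) := by
  have hCC : Cᴴ * C = 1 := by
    rw [← Matrix.star_eq_conjTranspose]; exact Matrix.mem_unitaryGroup_iff'.mp hC.1
  have hCC' : C * Cᴴ = 1 := by
    rw [← Matrix.star_eq_conjTranspose]; exact Matrix.mem_unitaryGroup_iff.mp hC.1
  have key : ∀ P : QMat ι, Cᴴ * (C * P * Cᴴ) * C = P := by
    intro P
    calc Cᴴ * (C * P * Cᴴ) * C = Cᴴ * C * (P * (Cᴴ * C)) := by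
          simp only [Matrix.mul_assoc]
      _ = P := by rw [hCC]; simp
  have hfin : {P : QMat ι | IsPauli P}.Finite := by
    rw [isPauli_range]; exact Set.finite_range _
  have hmaps : Set.MapsTo (fun P => C * P * Cᴴ) {P : QMat ι | IsPauli P}
      {P : QMat ι | IsPauli P} := fun P hP => hC.2 P hP
  have hinj : Set.InjOn (fun P => C * P * Cᴴ) {P : QMat ι | IsPauli P} := by
    intro P hP P' hP' h
    have h2 := congrArg (fun M => Cᴴ * M * C) h
    simpa only [key] using h2
  obtain ⟨P, hP, hPQ⟩ := ((hfin.injOn_iff_bijOn_of_mapsTo hmaps).mp hinj).surjOn hQ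
  have : Cᴴ * Q * C = P := by rw [← hPQ]; exact key P
  rw [this]; exact hP

lemma pauliXZ_mulVec (u w : ι → Bool) (φ : (ι → Bool) → ℂ) (s : ι → Bool) :
    (pauliXZ u w *ᵥ φ) s =
      (-1 : ℂ) ^ (Finset.univ.filter fun i => w i = true ∧ xor (s i) (u i) = true).card *
        φ (fun i => xor (s i) (u i)) := by
  unfold pauliXZ Matrix.mulVec dotProduct
  rw [Finset.sum_eq_single (fun i => xor (s i) (u i))] <;> dsimp only
  · rw [if_pos]
    funext i
    simp [Bool.xor_assoc]
  · intro t _ ht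
    rw [if_neg, zero_mul]
    intro h
    apply ht
    funext i
    have hi := congrFun h i
    rw [hi]
    simp [Bool.xor_assoc]
  · simp

lemma neg_one_pow_zmod (n : ℕ) : ((-1 : ℂ)) ^ n = if (n : ZMod 2) = 1 then -1 else 1 := by
  rcases Nat.even_or_odd n with h | h
  · rw [h.neg_one_pow, if_neg]
    have : (n : ZMod 2) = 0 := (ZMod.natCast_eq_zero_iff n 2).mpr h.two_dvd
    rw [this]; decide
  · rw [h.neg_one_pow, if_pos]
    rw [← ZMod.natCast_mod n 2, Nat.odd_iff.mp h]; rfl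

lemma dot_conj (v : (ι → Bool) → ℂ) :
    star v ⬝ᵥ v = ((∑ s, Complex.normSq (v s) : ℝ) : ℂ) := by
  push_cast
  unfold dotProduct
  refine Finset.sum_congr rfl fun s _ => ?_
  simp [Complex.normSq_eq_conj_mul_self]

lemma conj_quadratic (U : QMat ι) (hU : U ∈ Matrix.unitaryGroup (ι → Bool) ℂ)
    (M : QMat ι) (φ : (ι → Bool) → ℂ) :
    star (U *ᵥ φ) ⬝ᵥ (M *ᵥ (U *ᵥ φ)) = star φ ⬝ᵥ ((Uᴴ * M * U) *ᵥ φ) := by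
  have hCC : Uᴴ * U = 1 := by
    rw [← Matrix.star_eq_conjTranspose]; exact Matrix.mem_unitaryGroup_iff'.mp hU
  rw [Matrix.star_mulVec, ← Matrix.dotProduct_mulVec, Matrix.mulVec_mulVec,
    Matrix.mulVec_mulVec, Matrix.mul_assoc]

lemma sum_normSq_mulVec (U : QMat ι) (hU : U ∈ Matrix.unitaryGroup (ι → Bool) ℂ)
    (φ : (ι → Bool) → ℂ) :
    ∑ s, Complex.normSq ((U *ᵥ φ) s) = ∑ s, Complex.normSq (φ s) := by
  have h := conj_quadratic U hU 1 φ
  rw [Matrix.one_mulVec] at h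
  have hCC : Uᴴ * 1 * U = 1 := by
    rw [Matrix.mul_one, ← Matrix.star_eq_conjTranspose]
    exact Matrix.mem_unitaryGroup_iff'.mp hU
  rw [hCC, Matrix.one_mulVec, dot_conj, dot_conj] at h
  exact_mod_cast h

lemma measProb_add (φ : (ι → Bool) → ℂ) (i0 : ι) :
    measProb φ i0 false + measProb φ i0 true = ∑ s, Complex.normSq (φ s) := by
  unfold measProb
  rw [← Finset.sum_add_distrib]
  refine Finset.sum_congr rfl fun s _ => ?_
  cases h : s i0 <;> simp [h]

lemma measProb_sub (φ : (ι → Bool) → ℂ) (i0 : ι) :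
    ((measProb φ i0 false - measProb φ i0 true : ℝ) : ℂ) =
      star φ ⬝ᵥ (pauliXZ (fun _ => false) (fun i => decide (i = i0)) *ᵥ φ) := by
  unfold measProb dotProduct
  push_cast
  rw [← Finset.sum_sub_distrib]
  refine Finset.sum_congr rfl fun s _ => ?_
  rw [pauliXZ_mulVec]
  have hxor : (fun i => xor (s i) false) = s := by funext i; simp
  rw [hxor]
  have hcard : (Finset.univ.filter fun i => (decide (i = i0)) = true ∧ xor (s i) false = true).card
      = if s i0 = true then 1 else 0 := by
    split_ifs with h
    · rw [Finset.card_eq_one]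
      refine ⟨i0, ?_⟩
      ext i
      simp only [Finset.mem_filter, Finset.mem_univ, true_and, Finset.mem_singleton,
        decide_eq_true_eq, Bool.xor_false]
      constructor
      · rintro ⟨rfl, _⟩; rfl
      · rintro rfl; exact ⟨rfl, h⟩
    · rw [Finset.card_eq_zero]
      ext i
      simp only [Finset.mem_filter, Finset.mem_univ, true_and, Finset.notMem_empty,
        iff_false, not_and, decide_eq_true_eq, Bool.xor_false]
      rintro rfl
      exact fun hh => h hh
  rw [hcard]
  have hns : (starRingEnd ℂ) (φ s) * φ s = (Complex.normSq (φ s) : ℂ) := by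
    rw [← Complex.normSq_eq_conj_mul_self]
  cases h : s i0 <;> simp [h, hns]

end Aux

section Main

lemma sum_over_sumArrow {N a : ℕ} (g : ((Fin N ⊕ Fin a) → Bool) → ℂ) :
    ∑ s : (Fin N ⊕ Fin a) → Bool, g s
      = ∑ x : Fin N → Bool, ∑ v : Fin a → Bool, g (Sum.elim x v) := by
  rw [← (Equiv.sumArrowEquivProdArrow (Fin N) (Fin a) Bool).symm.sum_comp g,
    Fintype.sum_prod_type]
  rfl

lemma inputState_elim {N a : ℕ} (X x : Fin N → Bool) (ψ : (Fin a → Bool) → ℂ)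
    (v : Fin a → Bool) :
    inputState X ψ (Sum.elim x v) = if x = X then ψ v else 0 := rfl

lemma sum_normSq_inputState {N a : ℕ} (X : Fin N → Bool) (ψ : (Fin a → Bool) → ℂ) :
    ∑ s, Complex.normSq (inputState X ψ s) = ∑ v, Complex.normSq (ψ v) := by
  have h : ((∑ s, Complex.normSq (inputState X ψ s) : ℝ) : ℂ)
      = ((∑ v, Complex.normSq (ψ v) : ℝ) : ℂ) := by
    push_cast
    rw [sum_over_sumArrow (fun s => (Complex.normSq (inputState X ψ s) : ℂ))]
    rw [Finset.sum_eq_single X]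
    · refine Finset.sum_congr rfl fun v _ => ?_
      rw [inputState_elim, if_pos rfl]
    · intro x _ hx
      refine Finset.sum_eq_zero fun v _ => ?_
      rw [inputState_elim, if_neg hx]
      simp
    · simp
  exact_mod_cast h

lemma filter_card_sum_split {N a : ℕ} (p : (Fin N ⊕ Fin a) → Prop) :
    (Finset.univ.filter p).card
      = (Finset.univ.filter fun i : Fin N => p (Sum.inl i)).card
        + (Finset.univ.filter fun j : Fin a => p (Sum.inr j)).card := by
  classical
  simp only [Finset.card_filter]
  rw [Fintype.sum_sum_type]

/-- The central computation: the quadratic form of a Pauli on an input state. -/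
lemma quad_inputState {N a : ℕ} (α : ℂ) (u w : (Fin N ⊕ Fin a) → Bool)
    (ψ : (Fin a → Bool) → ℂ) (X : Fin N → Bool) :
    star (inputState X ψ) ⬝ᵥ ((α • pauliXZ u w) *ᵥ inputState X ψ)
      = if ∀ i, u (Sum.inl i) = false then
          (-1 : ℂ) ^ (Finset.univ.filter fun i => w (Sum.inl i) = true ∧ X i = true).card *
            (α * ∑ v : Fin a → Bool, (starRingEnd ℂ) (ψ v) *
              ((-1 : ℂ) ^ (Finset.univ.filter fun j =>
                  w (Sum.inr j) = true ∧ xor (v j) (u (Sum.inr j)) = true).card *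
                ψ (fun j => xor (v j) (u (Sum.inr j)))))
        else 0 := by
  classical
  have hsm : (α • pauliXZ u w) *ᵥ inputState X ψ = α • (pauliXZ u w *ᵥ inputState X ψ) :=
    Matrix.smul_mulVec α _ _
  rw [hsm, dotProduct_smul]
  unfold dotProduct
  rw [sum_over_sumArrow (fun s => star (inputState X ψ) s * (pauliXZ u w *ᵥ inputState X ψ) s)]
  have hterm : ∀ x v, star (inputState X ψ) (Sum.elim x v)
        * (pauliXZ u w *ᵥ inputState X ψ) (Sum.elim x v)
      = (starRingEnd ℂ) (if x = X then ψ v else 0) *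
        ((-1 : ℂ) ^ (Finset.univ.filter fun i =>
            w i = true ∧ xor (Sum.elim x v i) (u i) = true).card *
          inputState X ψ (fun i => xor (Sum.elim x v i) (u i))) := by
    intro x v
    rw [pauliXZ_mulVec]
    rfl
  simp only [hterm]
  rw [Finset.sum_eq_single X]
  rotate_left
  · intro x _ hx
    refine Finset.sum_eq_zero fun v _ => ?_
    rw [if_neg hx]; simp
  · simp
  -- now the inner sum at x = X
  by_cases hu : ∀ i, u (Sum.inl i) = false
  · rw [if_pos hu]
    have hc : (fun i => xor (X i) (u (Sum.inl i))) = X := by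
      funext i; rw [hu i, Bool.xor_false]
    have harg : ∀ v : Fin a → Bool,
        inputState X ψ (fun i => xor (Sum.elim X v i) (u i))
          = ψ (fun j => xor (v j) (u (Sum.inr j))) := by
      intro v
      unfold inputState
      dsimp only [Sum.elim_inl, Sum.elim_inr]
      exact if_pos hc
    have hcard : ∀ v : Fin a → Bool,
        (Finset.univ.filter fun i => w i = true ∧ xor (Sum.elim X v i) (u i) = true).card
          = (Finset.univ.filter fun i => w (Sum.inl i) = true ∧ X i = true).card
            + (Finset.univ.filter fun j =>
                w (Sum.inr j) = true ∧ xor (v j) (u (Sum.inr j)) = true).card := by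
      intro v
      rw [Finset.card_filter, Finset.card_filter, Finset.card_filter,
        Fintype.sum_sum_type]
      congr 1
      all_goals refine Finset.sum_congr rfl fun i _ => ?_
      all_goals simp [hu]
    simp only [harg, hcard, eq_self_iff_true, if_true, pow_add, smul_eq_mul,
      Finset.mul_sum]
    refine Finset.sum_congr rfl fun v _ => ?_
    ring
  · rw [if_neg hu]
    push_neg at hu
    obtain ⟨i1, hi1⟩ := hu
    have harg : ∀ v : Fin a → Bool,
        inputState X ψ (fun i => xor (Sum.elim X v i) (u i)) = 0 := by
      intro v
      unfold inputState
      rw [if_neg]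
      intro h
      have hthis := congrFun h i1
      simp only [Bool.not_eq_false] at hi1
      simp [hi1] at hthis
    simp only [harg, mul_zero, Finset.sum_const_zero, smul_zero]

end Main

section Final

lemma cast_card_filter_eq_sum {n : ℕ} (wt x : Fin n → Bool) :
    (((Finset.univ.filter fun i => wt i = true ∧ x i = true).card : ℕ) : ZMod 2)
      = ∑ i ∈ Finset.univ.filter fun i => wt i = true,
          (if x i then (1 : ZMod 2) else 0) := by
  rw [Finset.card_filter, Nat.cast_sum, Finset.sum_filter]
  refine Finset.sum_congr rfl fun i _ => ?_
  by_cases h1 : wt i = true <;> by_cases h2 : x i = true <;> simp [h1, h2]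

lemma zmod_if_aux (A B : ZMod 2) :
    (if A + B = 1 then (-1 : ℂ) else 1)
      = if xor (decide (A = 1)) (decide (B = 1)) then -1 else 1 := by
  have h : (A + B = 1) ↔ (xor (decide (A = 1)) (decide (B = 1)) = true) := by
    revert A B; decide
  exact if_congr h rfl rfl

lemma parity_card {nA nB a : ℕ} (w : (Fin (nA + nB) ⊕ Fin a) → Bool)
    (x : Fin nA → Bool) (y : Fin nB → Bool) :
    (-1 : ℂ) ^ (Finset.univ.filter fun i => w (Sum.inl i) = true ∧ concat x y i = true).card
      = if xor
          (parityOn (Finset.univ.filter fun i => w (Sum.inl (Fin.castAdd nB i)) = true) x)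
          (parityOn (Finset.univ.filter fun j => w (Sum.inl (Fin.natAdd nA j)) = true) y)
        then -1 else 1 := by
  rw [neg_one_pow_zmod]
  have hsplit : (((Finset.univ.filter fun i =>
          w (Sum.inl i) = true ∧ concat x y i = true).card : ℕ) : ZMod 2)
      = (((Finset.univ.filter fun i : Fin nA =>
            w (Sum.inl (Fin.castAdd nB i)) = true ∧ x i = true).card : ℕ) : ZMod 2)
        + (((Finset.univ.filter fun j : Fin nB =>
            w (Sum.inl (Fin.natAdd nA j)) = true ∧ y j = true).card : ℕ) : ZMod 2) := by
    rw [← Nat.cast_add]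
    congr 1
    rw [Finset.card_filter, Finset.card_filter, Finset.card_filter, Fin.sum_univ_add]
    congr 1
    all_goals refine Finset.sum_congr rfl fun i _ => ?_
    · simp [concat, Fin.append_left]
    · simp [concat, Fin.append_right]
  rw [hsplit, cast_card_filter_eq_sum, cast_card_filter_eq_sum]
  unfold parityOn
  exact zmod_if_aux _ _

lemma dpar_le_two {nA nB : ℕ} (D : Set ((Fin nA → Bool) × (Fin nB → Bool)))
    (f : (Fin nA → Bool) × (Fin nB → Bool) → Bool)
    (SA : Finset (Fin nA)) (SB : Finset (Fin nB)) (c : Bool)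
    (h : ∀ p ∈ D, f p = xor (xor (parityOn SA p.1) (parityOn SB p.2)) c) :
    Dpar D f ≤ 2 := by
  apply Nat.sInf_le
  exact ⟨1, 1, rfl, fun x => fun _ => parityOn SA x, fun y => fun _ => parityOn SB y,
    fun mA mB => xor (xor (mA 0) (mB 0)) c, fun p hp => (h p hp).symm⟩

lemma final_combine {γ : Type*} (D : Set γ) (f π : γ → Bool) (r : γ → ℝ) (β : ℂ)
    (hkey : ∀ p, ((r p : ℝ) : ℂ) = (if π p then -1 else 1) * β)
    (hsign : ∀ p ∈ D, (f p = true → r p < 0) ∧ (f p = false → 0 < r p))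
    {p₀ : γ} (hp₀ : p₀ ∈ D) :
    ∀ p ∈ D, f p = xor (π p) (xor (π p₀) (f p₀)) := by
  intro p hp
  have h0 := hkey p₀
  have h1 := hkey p
  have hiff : ∀ q ∈ D, (f q = true ↔ r q < 0) := by
    intro q hq
    constructor
    · intro h; exact (hsign q hq).1 h
    · intro h
      cases hfq : f q with
      | true => rfl
      | false => have h5 := (hsign q hq).2 hfq; linarith
  by_cases hpi : π p = π p₀
  · have hc : (r p : ℂ) = (r p₀ : ℂ) := by rw [h1, h0, hpi]
    have hrr : r p = r p₀ := by exact_mod_cast hc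
    have hff : f p = f p₀ := by
      cases hf0 : f p₀ with
      | true =>
        have hlt := (hiff p₀ hp₀).1 hf0
        exact (hiff p hp).2 (by rw [hrr]; exact hlt)
      | false =>
        cases hfp : f p with
        | false => rfl
        | true =>
          have h2 := (hiff p hp).1 hfp
          have h3 := (hsign p₀ hp₀).2 hf0
          rw [hrr] at h2; linarith
    rw [hff, hpi]
    cases (π p₀) <;> cases (f p₀) <;> rfl
  · have hsgn : (if π p then (-1 : ℂ) else 1) = -(if π p₀ then -1 else 1) := by
      cases hb : π p <;> cases hb0 : π p₀ <;> simp_all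
    have hneg : (r p : ℂ) = -(r p₀ : ℂ) := by rw [h1, hsgn, h0]; ring
    have hrr : r p = -r p₀ := by exact_mod_cast hneg
    have hff : f p = !(f p₀) := by
      cases hf0 : f p₀ with
      | true =>
        cases hfp : f p with
        | false => rfl
        | true =>
          have h2 := (hiff p hp).1 hfp
          have h3 := (hiff p₀ hp₀).1 hf0
          rw [hrr] at h2; linarith
      | false =>
        have h3 := (hsign p₀ hp₀).2 hf0
        have h4 : f p = true := (hiff p hp).2 (by rw [hrr]; linarith)
        rw [h4]; rfl
    have hpb : π p = !(π p₀) := by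
      cases hb : π p <;> cases hb0 : π p₀ <;> simp_all
    rw [hff, hpb]
    cases (π p₀) <;> cases (f p₀) <;> rfl

end Final
/-- If a partial Boolean function `f : D → {0,1}`,
`D ⊆ {0,1}^{n_A} × {0,1}^{n_B}`, is computed with error `ε < 1/2` by a unitary circuit
consisting only of Clifford gates (with an arbitrary fixed, normalized advice state),
then `f` agrees on `D` with a parity
`(⊕_{i ∈ S_A} x_i) ⊕ (⊕_{j ∈ S_B} y_j) ⊕ c`; consequently `D‖(f) ≤ 2`. -/
theorem clifford_circuit_computes_parity {nA nB : ℕ} (hN : 0 < nA + nB)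
    (D : Set ((Fin nA → Bool) × (Fin nB → Bool)))
    (f : (Fin nA → Bool) × (Fin nB → Bool) → Bool)
    (ε : ℝ) (hε0 : 0 ≤ ε) (hε : ε < 1 / 2)
    (a : ℕ) (gates : List (Gate (Fin (nA + nB) ⊕ Fin a)))
    (ψ : (Fin a → Bool) → ℂ)
    (hcliff : ∀ g ∈ gates, IsClifford g.mat) (hψ : Normalized ψ)
    (hcomp : ∀ p ∈ D, 1 - ε ≤
      measProb ((circUnitary gates).mulVec (inputState (concat p.1 p.2) ψ))
        (Sum.inl ⟨0, hN⟩) (f p)) :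
    (∃ (SA : Finset (Fin nA)) (SB : Finset (Fin nB)) (c : Bool),
      ∀ p ∈ D, f p = xor (xor (parityOn SA p.1) (parityOn SB p.2)) c) ∧
    Dpar D f ≤ 2 := by
  classical
  rcases D.eq_empty_or_nonempty with rfl | ⟨p₀, hp₀⟩
  · exact ⟨⟨∅, ∅, false, fun p hp => absurd hp (Set.notMem_empty p)⟩,
      dpar_le_two _ f ∅ ∅ false (fun p hp => absurd hp (Set.notMem_empty p))⟩
  obtain ⟨α, u, w, hα, hP⟩ : IsPauli ((circUnitary gates)ᴴ * pauliXZ (fun _ => false)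
      (fun i => decide (i = (Sum.inl ⟨0, hN⟩ : Fin (nA + nB) ⊕ Fin a))) *
      circUnitary gates) :=
    isPauli_conj_inv (isClifford_circ gates hcliff)
      ⟨1, _, _, Or.inl rfl, (one_smul ℂ _).symm⟩
  have hU := (isClifford_circ gates hcliff).1
  have hsum1 : ∀ p : (Fin nA → Bool) × (Fin nB → Bool),
      measProb (circUnitary gates *ᵥ inputState (concat p.1 p.2) ψ) (Sum.inl ⟨0, hN⟩) false
        + measProb (circUnitary gates *ᵥ inputState (concat p.1 p.2) ψ)
            (Sum.inl ⟨0, hN⟩) true = 1 := by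
    intro p
    rw [measProb_add, sum_normSq_mulVec _ hU, sum_normSq_inputState]
    exact hψ
  have hsign : ∀ p ∈ D,
      (f p = true →
        measProb (circUnitary gates *ᵥ inputState (concat p.1 p.2) ψ)
            (Sum.inl ⟨0, hN⟩) false
          - measProb (circUnitary gates *ᵥ inputState (concat p.1 p.2) ψ)
            (Sum.inl ⟨0, hN⟩) true < 0) ∧
      (f p = false →
        0 < measProb (circUnitary gates *ᵥ inputState (concat p.1 p.2) ψ)
            (Sum.inl ⟨0, hN⟩) false
          - measProb (circUnitary gates *ᵥ inputState (concat p.1 p.2) ψ)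
            (Sum.inl ⟨0, hN⟩) true) := by
    intro p hp
    have h1 := hsum1 p
    have h2 := hcomp p hp
    constructor
    · intro hf; rw [hf] at h2; linarith
    · intro hf; rw [hf] at h2; linarith
  have hrq : ∀ p : (Fin nA → Bool) × (Fin nB → Bool),
      ((measProb (circUnitary gates *ᵥ inputState (concat p.1 p.2) ψ)
            (Sum.inl ⟨0, hN⟩) false
          - measProb (circUnitary gates *ᵥ inputState (concat p.1 p.2) ψ)
            (Sum.inl ⟨0, hN⟩) true : ℝ) : ℂ)
        = star (inputState (concat p.1 p.2) ψ) ⬝ᵥ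
            ((α • pauliXZ u w) *ᵥ inputState (concat p.1 p.2) ψ) := by
    intro p
    rw [measProb_sub, conj_quadratic _ hU, ← hP]
  by_cases hu : ∀ i : Fin (nA + nB), u (Sum.inl i) = false
  · have hkey : ∀ p : (Fin nA → Bool) × (Fin nB → Bool),
        ((measProb (circUnitary gates *ᵥ inputState (concat p.1 p.2) ψ)
              (Sum.inl ⟨0, hN⟩) false
            - measProb (circUnitary gates *ᵥ inputState (concat p.1 p.2) ψ)
              (Sum.inl ⟨0, hN⟩) true : ℝ) : ℂ)
          = (if xor
                (parityOn (Finset.univ.filter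
                  fun i => w (Sum.inl (Fin.castAdd nB i)) = true) p.1)
                (parityOn (Finset.univ.filter
                  fun j => w (Sum.inl (Fin.natAdd nA j)) = true) p.2)
              then -1 else 1) *
            (α * ∑ v : Fin a → Bool, (starRingEnd ℂ) (ψ v) *
              ((-1 : ℂ) ^ (Finset.univ.filter fun j =>
                  w (Sum.inr j) = true ∧ xor (v j) (u (Sum.inr j)) = true).card *
                ψ (fun j => xor (v j) (u (Sum.inr j))))) := by
      intro p
      rw [hrq p, quad_inputState, if_pos hu, parity_card w p.1 p.2]
    have hmain := final_combine D f
      (fun p => xor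
        (parityOn (Finset.univ.filter
          fun i => w (Sum.inl (Fin.castAdd nB i)) = true) p.1)
        (parityOn (Finset.univ.filter
          fun j => w (Sum.inl (Fin.natAdd nA j)) = true) p.2))
      (fun p => measProb (circUnitary gates *ᵥ inputState (concat p.1 p.2) ψ)
            (Sum.inl ⟨0, hN⟩) false
          - measProb (circUnitary gates *ᵥ inputState (concat p.1 p.2) ψ)
            (Sum.inl ⟨0, hN⟩) true)
      (α * ∑ v : Fin a → Bool, (starRingEnd ℂ) (ψ v) *
        ((-1 : ℂ) ^ (Finset.univ.filter fun j =>
            w (Sum.inr j) = true ∧ xor (v j) (u (Sum.inr j)) = true).card *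
          ψ (fun j => xor (v j) (u (Sum.inr j)))))
      hkey hsign hp₀
    exact ⟨⟨_, _, _, hmain⟩, dpar_le_two _ _ _ _ _ hmain⟩
  · exfalso
    have h0 : measProb (circUnitary gates *ᵥ inputState (concat p₀.1 p₀.2) ψ)
          (Sum.inl ⟨0, hN⟩) false
        - measProb (circUnitary gates *ᵥ inputState (concat p₀.1 p₀.2) ψ)
          (Sum.inl ⟨0, hN⟩) true = 0 := by
      have h := hrq p₀
      rw [quad_inputState, if_neg hu] at h
      exact_mod_cast h
    have h1 := hsum1 p₀
    have h2 := hcomp p₀ hp₀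
    cases hf : f p₀ <;> rw [hf] at h2 <;> linarith

end MagicComm
end

section
/- Let ε ∈ [0,1], let α ∈ [1−ε, 1], let f ∈ {0,1}, let k ∈ ℕ and let p : {0,1}^k → {0,1}. In M₂(ℂ), let e₀, e₁ denote the standard basis column vectors, let X = [[0,1],[1,0]], and set σ = α·e_f e_f^† + (1−α)·e_{1−f} e_{1−f}^†. Define the 2^{k+1} × 2^{k+1} matrices ρ = 2^{−k}·Σ_{r∈{0,1}^k} (X^{p(r)} σ X^{p(r)}) ⊗ E_{rr} and Sim = 2^{−k}·Σ_{r∈{0,1}^k} (X^{p(r)} e_f e_f^† X^{p(r)}) ⊗ E_{rr}, where E_{rr} is the 2^k × 2^k matrix with a single 1 in the (r,r) diagonal entry. Then the trace norm (sum of singular values) of ρ − Sim equals 2(1−α), and in particular ‖ρ − Sim‖₁ ≤ 2ε. -/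
open Matrix BigOperators
open scoped ComplexOrder

attribute [local instance] Classical.propDecidable

namespace MagicComm

/-- The trace norm `‖A‖₁ = Tr √(AᴴA)` of a complex square matrix (the sum of the
singular values of `A`). -/
noncomputable def traceNorm {n : Type} [Fintype n] [DecidableEq n] (A : Matrix n n ℂ) : ℝ :=
  (((Matrix.posSemidef_conjTranspose_mul_self A).1.eigenvectorUnitary.1 *
      diagonal (fun i => ((Real.sqrt
        ((Matrix.posSemidef_conjTranspose_mul_self A).1.eigenvalues i) : ℝ) : ℂ)) *
      (star (Matrix.posSemidef_conjTranspose_mul_self A).1.eigenvectorUnitary :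
        Matrix n n ℂ))).trace.re

/-- The Kronecker product `A ⊗ B` on a product of registers. -/
noncomputable def kron2 {P Q P' Q' : Type} (A : Matrix P P' ℂ) (B : Matrix Q Q' ℂ) :
    Matrix (P × Q) (P' × Q') ℂ := fun p q => A p.1 q.1 * B p.2 q.2

/-- The rank-one projector `e_b e_b†` onto a standard basis vector of `ℂ²`. -/
noncomputable def basMat (b : Bool) : Matrix Bool Bool ℂ := fun i j =>
  if i = b ∧ j = b then 1 else 0

/-- The Pauli matrix `X = [[0,1],[1,0]]`. -/
noncomputable def Xmat : Matrix Bool Bool ℂ := fun i j => if i = j then 0 else 1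

/-- `X^0 = I`, `X^1 = X`. -/
noncomputable def Xpow : Bool → Matrix Bool Bool ℂ
  | false => 1
  | true => Xmat

lemma conj_basMat (b g : Bool) : Xpow b * basMat g * Xpow b = basMat (xor g b) := by
  ext i j
  cases b <;> cases g <;> cases i <;> cases j <;>
    simp [Xpow, Xmat, basMat, Matrix.mul_apply, Fintype.sum_bool]

lemma traceNorm_eq {n : Type} [Fintype n] [DecidableEq n] (A B : Matrix n n ℂ)
    (hB : B.PosSemidef) (h : B ^ 2 = Aᴴ * A) : traceNorm A = B.trace.re := by
  unfold traceNorm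
  have hP := Matrix.posSemidef_conjTranspose_mul_self A
  have e : (hP.1.eigenvectorUnitary.1 *
      diagonal (fun i => ((Real.sqrt (hP.1.eigenvalues i) : ℝ) : ℂ)) *
      (star hP.1.eigenvectorUnitary : Matrix n n ℂ)) = hP.1.cfc Real.sqrt := by
    simp [Matrix.IsHermitian.cfc, Unitary.conjStarAlgAut_apply, Function.comp_def]
  open scoped MatrixOrder in
  rw [e, ← hP.1.cfc_eq, ← cfcₙ_eq_cfc, ← CFC.sqrt_eq_real_sqrt _
    (Matrix.nonneg_iff_posSemidef.mpr hP), ← h,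
    CFC.sqrt_sq B (Matrix.nonneg_iff_posSemidef.mpr hB)]

lemma diff_eq_diagonal (α : ℝ) (f : Bool) (k : ℕ) (p : (Fin k → Bool) → Bool) :
    ((((2 : ℂ) ^ k)⁻¹ •
          ∑ r : Fin k → Bool,
            kron2 (Xpow (p r) * ((α : ℂ) • basMat f + (((1 - α : ℝ)) : ℂ) • basMat (!f)) *
                Xpow (p r))
              (Matrix.single r r (1 : ℂ))) -
          ((2 : ℂ) ^ k)⁻¹ •
          ∑ r : Fin k → Bool,
            kron2 (Xpow (p r) * basMat f * Xpow (p r))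
              (Matrix.single r r (1 : ℂ))) =
      Matrix.diagonal (fun i : Bool × (Fin k → Bool) =>
        if i.1 = xor (!f) (p i.2) then (((1 - α) / 2 ^ k : ℝ) : ℂ)
        else -(((1 - α) / 2 ^ k : ℝ) : ℂ)) := by
  ext ⟨b, r⟩ ⟨b', r'⟩
  simp only [Matrix.sub_apply, Matrix.smul_apply, Matrix.sum_apply, kron2,
    Matrix.single, Matrix.of_apply, smul_eq_mul]
  rcases eq_or_ne r r' with rfl | hne
  · rw [Finset.sum_eq_single r (fun b _ hb => by simp [hb]) (by simp),
      Finset.sum_eq_single r (fun b _ hb => by simp [hb]) (by simp)]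
    have h1 := conj_basMat (p r) f
    have h2 := conj_basMat (p r) (!f)
    have : Xpow (p r) * ((α : ℂ) • basMat f + (((1 - α : ℝ)) : ℂ) • basMat (!f)) * Xpow (p r)
        = (α : ℂ) • basMat (xor f (p r)) + (((1 - α : ℝ)) : ℂ) • basMat (xor (!f) (p r)) := by
      rw [mul_add, add_mul, mul_smul_comm, mul_smul_comm, smul_mul_assoc, smul_mul_assoc, h1, h2]
    rw [this, conj_basMat]
    cases hb : b <;> cases hb' : b' <;> cases hf : f <;> cases hpr : p r <;>
      simp [basMat, Matrix.diagonal_apply, hpr, Matrix.add_apply, Matrix.smul_apply] <;>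
      field_simp <;> ring
  · simp [Finset.sum_eq_zero, hne, Matrix.diagonal_apply, Ne.symm hne]

/-- Let `ε ∈ [0,1]`, `α ∈ [1-ε, 1]`, `f ∈ {0,1}`, and
`p : {0,1}^k → {0,1}`.  With `σ = α e_f e_f† + (1-α) e_{1-f} e_{1-f}†`,
`ρ = 2^{-k} Σ_r (X^{p(r)} σ X^{p(r)}) ⊗ E_{rr}` and
`Sim = 2^{-k} Σ_r (X^{p(r)} e_f e_f† X^{p(r)}) ⊗ E_{rr}`, the trace norm of `ρ - Sim`
equals `2 (1 - α)`; in particular `‖ρ - Sim‖₁ ≤ 2 ε`. -/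
theorem simulator_trace_distance (ε α : ℝ) (hε0 : 0 ≤ ε) (hε1 : ε ≤ 1)
    (hα1 : 1 - ε ≤ α) (hα2 : α ≤ 1) (f : Bool) (k : ℕ) (p : (Fin k → Bool) → Bool) :
    traceNorm
        ((((2 : ℂ) ^ k)⁻¹ •
          ∑ r : Fin k → Bool,
            kron2 (Xpow (p r) * ((α : ℂ) • basMat f + (((1 - α : ℝ)) : ℂ) • basMat (!f)) *
                Xpow (p r))
              (Matrix.single r r (1 : ℂ))) -
          ((2 : ℂ) ^ k)⁻¹ •
          ∑ r : Fin k → Bool,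
            kron2 (Xpow (p r) * basMat f * Xpow (p r))
              (Matrix.single r r (1 : ℂ))) =
      2 * (1 - α) ∧
    traceNorm
        ((((2 : ℂ) ^ k)⁻¹ •
          ∑ r : Fin k → Bool,
            kron2 (Xpow (p r) * ((α : ℂ) • basMat f + (((1 - α : ℝ)) : ℂ) • basMat (!f)) *
                Xpow (p r))
              (Matrix.single r r (1 : ℂ))) -
          ((2 : ℂ) ^ k)⁻¹ •
          ∑ r : Fin k → Bool,
            kron2 (Xpow (p r) * basMat f * Xpow (p r))
              (Matrix.single r r (1 : ℂ))) ≤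
      2 * ε := by
  set c : ℝ := (1 - α) / 2 ^ k with hc
  have hc0 : 0 ≤ c := by
    apply div_nonneg (by linarith) (by positivity)
  have hB : (Matrix.diagonal (fun _ : Bool × (Fin k → Bool) => ((c : ℝ) : ℂ))).PosSemidef := by
    rw [Matrix.posSemidef_diagonal_iff]
    intro i
    exact_mod_cast hc0
  have key : traceNorm
      ((((2 : ℂ) ^ k)⁻¹ •
          ∑ r : Fin k → Bool,
            kron2 (Xpow (p r) * ((α : ℂ) • basMat f + (((1 - α : ℝ)) : ℂ) • basMat (!f)) *
                Xpow (p r))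
              (Matrix.single r r (1 : ℂ))) -
          ((2 : ℂ) ^ k)⁻¹ •
          ∑ r : Fin k → Bool,
            kron2 (Xpow (p r) * basMat f * Xpow (p r))
              (Matrix.single r r (1 : ℂ))) = 2 * (1 - α) := by
    rw [traceNorm_eq _ _ hB]
    · rw [Matrix.trace_diagonal]
      simp only [Complex.re_sum]
      rw [Finset.sum_const]
      have hcard : Fintype.card (Bool × (Fin k → Bool)) = 2 * 2 ^ k := by
        simp [Fintype.card_prod, Fintype.card_fun]
      simp only [Finset.card_univ, hcard, Complex.ofReal_re, nsmul_eq_mul]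
      push_cast
      rw [hc]
      field_simp
    · rw [diff_eq_diagonal α f k p]
      rw [Matrix.diagonal_conjTranspose, Matrix.diagonal_mul_diagonal,
        pow_two, Matrix.diagonal_mul_diagonal]
      refine congrArg Matrix.diagonal (funext fun i => ?_)
      simp only [Pi.mul_apply, Pi.star_apply]
      by_cases h : i.1 = xor (!f) (p i.2)
      · rw [if_pos h, Complex.star_def, Complex.conj_ofReal]
      · rw [if_neg h, star_neg, Complex.star_def, Complex.conj_ofReal]
        ring
  exact ⟨key, by rw [key]; linarith⟩

end MagicComm
end
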